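/- For every integer n ≥ 2 and every ω > 0, setting l = ⌈(1 + ω) · log n / log(1/(2q))⌉, the one-sided random walk satisfies P( max_{0 ≤ k ≤ n} Z_k ≥ l ) ≤ n^{−ω} + c · n^{−(1+ω)}, where c = 2√(pq)/(1 − 2√(pq))². -/

import Mathlib

open MeasureTheory ProbabilityTheory

private def zf (b : ℕ → Bool) : ℕ → ℕ
  | 0 => 0
  | k+1 => if b (k+1) then zf b k + 1 else zf b k - 1

private lemma zf_congr {b b' : ℕ → Bool} : ∀ {k}, (∀ i, 1 ≤ i → i ≤ k → b i = b' i) →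
    zf b k = zf b' k
  | 0, _ => rfl
  | k+1, h => by
    have ih := zf_congr (b := b) (b' := b') (k := k)
      (fun i h1 h2 => h i h1 (h2.trans (Nat.le_succ k)))
    simp only [zf, ih, h (k+1) (Nat.le_add_left 1 k) le_rfl]

private lemma measurableSet_pi_bool {α : Type*} [Finite α] (s : Set (α → Bool)) :
    MeasurableSet s := by
  have h1 : ∀ v : α → Bool, MeasurableSet ({v} : Set (α → Bool)) := by
    intro v
    have : ({v} : Set (α → Bool)) = ⋂ i, (fun u => u i) ⁻¹' {v i} := by
      ext u; simp [funext_iff]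
    rw [this]
    exact MeasurableSet.iInter fun i => (measurable_pi_apply i) (measurableSet_singleton _)
  have : s = ⋃ v ∈ s, {v} := by simp
  rw [this]
  exact MeasurableSet.biUnion s.to_countable (fun v _ => h1 v)

private lemma sum_shift (ρ : ℝ) (f : ℕ → ℝ) (L : ℕ) :
    (∑ z ∈ Finset.range (L+1), (if z = 0 then 0 else ρ^z * f (z-1))) + ρ^(L+1) * f L
      = ρ * ∑ z ∈ Finset.range (L+1), ρ^z * f z := by
  rw [Finset.sum_range_succ' (fun z => if z = 0 then 0 else ρ^z * f (z-1)) L]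
  simp only [Nat.add_sub_cancel, Nat.succ_ne_zero, if_false, if_pos rfl]
  rw [Finset.mul_sum]
  have h1 : ∀ z, ρ * (ρ^z * f z) = ρ^(z+1) * f z := fun z => by rw [pow_succ]; ring
  rw [Finset.sum_congr rfl fun z _ => h1 z, Finset.sum_range_succ]
  simp

private lemma sum_shift2 (ρ : ℝ) (f : ℕ → ℝ) (L : ℕ) (hf : f (L+1) = 0) :
    ρ * (∑ z ∈ Finset.range (L+1), ρ^z * f (z+1))
      = (∑ z ∈ Finset.range (L+1), ρ^z * f z) - f 0 := by
  rw [Finset.mul_sum]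
  have h1 : ∀ z, ρ * (ρ^z * f (z+1)) = ρ^(z+1) * f (z+1) := fun z => by rw [pow_succ]; ring
  rw [Finset.sum_congr rfl fun z _ => h1 z]
  have h2 := Finset.sum_range_succ' (fun z => ρ^z * f z) (L+1)
  have h3 := Finset.sum_range_succ (fun z => ρ^z * f z) (L+1)
  simp only [pow_zero, one_mul] at h2
  rw [hf] at h3
  simp only [mul_zero, add_zero] at h3
  linarith [h2, h3]

set_option maxHeartbeats 1000000 in
theorem stmt_4
    {Ω : Type*} [MeasurableSpace Ω] (μ : Measure Ω) [IsProbabilityMeasure μ]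
    (p q : ℝ) (hp : 1/2 < p) (hp1 : p < 1) (hq : q = 1 - p)
    (ξ : ℕ → Ω → Bool) (hmeas : ∀ k, Measurable (ξ k))
    (hindep : iIndepFun ξ μ)
    (hdist : ∀ k, 1 ≤ k → μ {ω | ξ k ω = true} = ENNReal.ofReal q)
    (Z : ℕ → Ω → ℕ)
    (hZ0 : ∀ ω, Z 0 ω = 0)
    (hZ : ∀ k ω, Z (k+1) ω = if ξ (k+1) ω then Z k ω + 1 else Z k ω - 1)
    (n : ℕ) (hn : 2 ≤ n) (w : ℝ) (hw : 0 < w)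
    (l : ℕ) (hl : l = ⌈(1 + w) * Real.log n / Real.log (1 / (2*q))⌉₊) :
    μ {ω | ∃ k ≤ n, l ≤ Z k ω} ≤
      ENNReal.ofReal ((n : ℝ) ^ (-w)
        + (2 * Real.sqrt (p*q) / (1 - 2 * Real.sqrt (p*q))^2) * (n : ℝ) ^ (-(1 + w))) := by
  -- numeric basics
  have hq0 : 0 < q := by rw [hq]; linarith
  have hq2 : 2*q < 1 := by rw [hq]; linarith
  have hqp : q < p := by rw [hq]; linarith
  have hp0 : 0 < p := by linarith
  have hpq1 : p + q = 1 := by rw [hq]; ring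
  set ρ : ℝ := p / q with hρ
  have hρ1 : 1 < ρ := (one_lt_div hq0).mpr hqp
  have hρ0 : 0 < ρ := lt_trans one_pos hρ1
  have hn0 : (0:ℝ) < n := by positivity
  have hn1 : (1:ℝ) < n := by exact_mod_cast Nat.lt_of_lt_of_le one_lt_two hn
  have hn2 : (2:ℝ) ≤ n := by exact_mod_cast hn
  have hlogn : 0 < Real.log n := Real.log_pos hn1
  have h2q0 : 0 < 2*q := by linarith
  have hlog2q : 0 < Real.log (1/(2*q)) := Real.log_pos ((one_lt_one_div h2q0) hq2)
  have hl1 : 1 ≤ l := by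
    rw [hl]
    have : 0 < (1 + w) * Real.log n / Real.log (1/(2*q)) :=
      div_pos (mul_pos (by linarith) hlogn) hlog2q
    exact Nat.one_le_iff_ne_zero.mpr (by positivity)
  have hkey : (2*q)^l ≤ (n:ℝ) ^ (-(1+w)) := by
    have hceil : (1 + w) * Real.log n / Real.log (1/(2*q)) ≤ (l:ℝ) := hl ▸ Nat.le_ceil _
    have h1 : (1 + w) * Real.log n ≤ (l:ℝ) * Real.log (1/(2*q)) := by
      rw [div_le_iff₀ hlog2q] at hceil; linarith
    rw [one_div, Real.log_inv] at h1
    have h2 : (l:ℝ) * Real.log (2*q) ≤ -((1+w) * Real.log n) := by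
      rw [mul_neg] at h1; linarith
    calc (2*q)^l = Real.exp ((l:ℝ) * Real.log (2*q)) := by
          rw [Real.exp_nat_mul, Real.exp_log h2q0]
      _ ≤ Real.exp (-((1+w) * Real.log n)) := Real.exp_le_exp.mpr h2
      _ = (n:ℝ) ^ (-(1+w)) := by
          rw [Real.rpow_def_of_pos hn0]; congr 1; ring
  -- measurability of Z
  have hZmeas : ∀ k, Measurable (Z k) := by
    intro k; induction k with
    | zero =>
      have : Z 0 = fun _ => 0 := funext hZ0
      rw [this]; exact measurable_const
    | succ k ih =>
      have : Z (k+1) = fun ω => if ξ (k+1) ω = true then Z k ω + 1 else Z k ω - 1 := by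
        funext ω; simpa using hZ k ω
      rw [this]
      have h1 : Measurable fun ω => Z k ω + 1 :=
        (measurable_from_top (f := fun t : ℕ => t + 1)).comp ih
      have h2 : Measurable fun ω => Z k ω - 1 :=
        (measurable_from_top (f := fun t : ℕ => t - 1)).comp ih
      exact Measurable.ite (hmeas (k+1) (measurableSet_singleton true)) h1 h2
  have Zeq : ∀ k ω, Z k ω = zf (fun i => ξ i ω) k := by
    intro k; induction k with
    | zero => intro ω; rw [hZ0]; rfl
    | succ k ih => intro ω; rw [hZ k ω, zf, ih ω]
  -- sets
  set S : ℕ → Set Ω := fun i => ξ i ⁻¹' {true} with hS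
  set A : ℕ → ℕ → Set Ω := fun k z => {ω | (∀ i ≤ k, Z i ω < l) ∧ Z k ω = z} with hA
  set Hit : ℕ → Set Ω := fun k => {ω | ∃ i ≤ k, l ≤ Z i ω} with hHit
  have hSmeas : ∀ i, MeasurableSet (S i) := fun i => hmeas i (measurableSet_singleton true)
  have hAmeas : ∀ k z, MeasurableSet (A k z) := by
    intro k z
    have : A k z = (⋂ i ∈ Finset.range (k+1), (Z i) ⁻¹' (Set.Iio l)) ∩ (Z k) ⁻¹' {z} := by
      ext ω
      simp only [hA, Set.mem_setOf_eq, Set.mem_inter_iff, Set.mem_iInter, Set.mem_preimage,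
        Set.mem_Iio, Set.mem_singleton_iff, Finset.mem_range, Nat.lt_succ_iff]
    rw [this]
    exact ((MeasurableSet.biInter (Set.to_countable _)
      (fun i _ => hZmeas i (Set.to_countable _).measurableSet)).inter
      (hZmeas k (Set.to_countable _).measurableSet))
  have hHitmeas : ∀ k, MeasurableSet (Hit k) := by
    intro k
    have : Hit k = ⋃ i ∈ Finset.range (k+1), (Z i) ⁻¹' (Set.Ici l) := by
      ext ω
      simp only [hHit, Set.mem_setOf_eq, Set.mem_iUnion, Set.mem_preimage, Set.mem_Ici,
        Finset.mem_range, Nat.lt_succ_iff]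
      tauto
    rw [this]
    exact MeasurableSet.biUnion (Set.to_countable _)
      (fun i _ => hZmeas i (Set.to_countable _).measurableSet)
  -- product rule
  have hprod : ∀ k z (t : Set Bool), MeasurableSet t →
      μ (A k z ∩ ξ (k+1) ⁻¹' t) = μ (A k z) * μ (ξ (k+1) ⁻¹' t) := by
    intro k z t ht
    have hdisj : Disjoint (Finset.Icc 1 k) ({k+1} : Finset ℕ) := by
      simp only [Finset.disjoint_left, Finset.mem_Icc, Finset.mem_singleton]
      omega
    have hIF := hindep.indepFun_finset (Finset.Icc 1 k) {k+1} hdisj hmeas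
    have hmem : (k+1) ∈ ({k+1} : Finset ℕ) := Finset.mem_singleton_self _
    have hIF2 : IndepFun (fun ω (i : Finset.Icc 1 k) => ξ i ω) (ξ (k+1)) μ := by
      have := hIF.comp measurable_id
        (measurable_pi_apply (⟨k+1, hmem⟩ : ({k+1} : Finset ℕ)))
      exact this
    classical
    set ex : (Finset.Icc 1 k → Bool) → (ℕ → Bool) :=
      fun v j => if h : j ∈ Finset.Icc 1 k then v ⟨j, h⟩ else false with hex
    set B : Set (Finset.Icc 1 k → Bool) :=
      {v | (∀ i ≤ k, zf (ex v) i < l) ∧ zf (ex v) k = z} with hB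
    have hrep : A k z = (fun ω (i : Finset.Icc 1 k) => ξ i ω) ⁻¹' B := by
      ext ω
      have hzz : ∀ i, i ≤ k → Z i ω = zf (ex (fun (i : Finset.Icc 1 k) => ξ i ω)) i := by
        intro i hi
        rw [Zeq i ω]
        apply zf_congr
        intro j hj1 hj2
        have hjm : j ∈ Finset.Icc 1 k := Finset.mem_Icc.mpr ⟨hj1, hj2.trans hi⟩
        simp only [hex, hjm, dif_pos]
      simp only [hA, Set.mem_setOf_eq, Set.mem_preimage, hB]
      constructor
      · rintro ⟨h1, h2⟩
        refine ⟨fun i hi => ?_, ?_⟩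
        · rw [← hzz i hi]; exact h1 i hi
        · rw [← hzz k le_rfl]; exact h2
      · rintro ⟨h1, h2⟩
        refine ⟨fun i hi => ?_, ?_⟩
        · rw [hzz i hi]; exact h1 i hi
        · rw [hzz k le_rfl]; exact h2
    rw [hrep]
    exact hIF2.measure_inter_preimage_eq_mul B t (measurableSet_pi_bool B) ht
  -- masses
  set m : ℕ → ℕ → ℝ := fun k z => (μ (A k z)).toReal with hm
  set hh : ℕ → ℝ := fun k => (μ (Hit k)).toReal with hhdef
  have hμtrue : ∀ k, μ (ξ (k+1) ⁻¹' {true}) = ENNReal.ofReal q := by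
    intro k
    have := hdist (k+1) (Nat.le_add_left 1 k)
    exact this
  have hμfalse : ∀ k, μ (ξ (k+1) ⁻¹' {false}) = ENNReal.ofReal p := by
    intro k
    have hc : ξ (k+1) ⁻¹' {false} = (ξ (k+1) ⁻¹' {true})ᶜ := by
      ext ω
      simp only [Set.mem_preimage, Set.mem_singleton_iff, Set.mem_compl_iff]
      cases h : ξ (k+1) ω <;> simp
    rw [hc, measure_compl (hmeas (k+1) (measurableSet_singleton true)) (measure_ne_top μ _),
      measure_univ, hμtrue k, ← ENNReal.ofReal_one, ← ENNReal.ofReal_sub 1 hq0.le]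
    congr 1
    linarith [hq]
  have hmq : ∀ k z, (μ (A k z ∩ S (k+1))).toReal = q * m k z := by
    intro k z
    rw [hS]
    rw [hprod k z {true} (measurableSet_singleton true), hμtrue k, ENNReal.toReal_mul,
      ENNReal.toReal_ofReal hq0.le, mul_comm]
  have hmp : ∀ k z, (μ (A k z ∩ (S (k+1))ᶜ)).toReal = p * m k z := by
    intro k z
    have hcompl : (S (k+1))ᶜ = ξ (k+1) ⁻¹' {false} := by
      ext ω; simp [hS]
    rw [hcompl, hprod k z {false} (measurableSet_singleton false), hμfalse k,
      ENNReal.toReal_mul, ENNReal.toReal_ofReal hp0.le, mul_comm]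
  -- basic mass facts
  have hm_nonneg : ∀ k z, 0 ≤ m k z := fun k z => ENNReal.toReal_nonneg
  have hm_le_one : ∀ k z, m k z ≤ 1 := by
    intro k z
    exact ENNReal.toReal_mono ENNReal.one_ne_top prob_le_one
  have hml : ∀ k, m k l = 0 := by
    intro k
    have : A k l = ∅ := by
      ext ω
      simp only [hA, Set.mem_setOf_eq, Set.mem_empty_iff_false, iff_false, not_and]
      intro h1 h2
      exact absurd (h1 k le_rfl) (by omega)
    rw [hm]; simp [this]
  -- recurrences
  have hfa : ∀ (k:ℕ) ω, (∀ i ≤ k+1, Z i ω < l) ↔ (∀ i ≤ k, Z i ω < l) ∧ Z (k+1) ω < l := by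
    intro k ω
    constructor
    · intro h; exact ⟨fun i hi => h i (hi.trans (Nat.le_succ _)), h _ le_rfl⟩
    · rintro ⟨h1, h2⟩ i hi
      rcases Nat.eq_or_lt_of_le hi with h | h
      · rw [h]; exact h2
      · exact h1 i (Nat.lt_succ_iff.mp h)
  have hset0 : ∀ k, A (k+1) 0 = (A k 1 ∪ A k 0) ∩ (S (k+1))ᶜ := by
    intro k
    ext ω
    simp only [hA, hS, Set.mem_setOf_eq, Set.mem_inter_iff, Set.mem_union, Set.mem_compl_iff,
      Set.mem_preimage, Set.mem_singleton_iff]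
    rw [hfa k ω]
    by_cases hb : ξ (k+1) ω = true
    · have hzz : Z (k+1) ω = Z k ω + 1 := by rw [hZ, if_pos hb]
      constructor
      · rintro ⟨⟨h1, h2⟩, h3⟩; exact absurd h3 (by omega)
      · rintro ⟨-, h⟩; exact absurd hb h
    · have hzz : Z (k+1) ω = Z k ω - 1 := by rw [hZ, if_neg hb]
      constructor
      · rintro ⟨⟨h1, h2⟩, h3⟩
        have hch : Z k ω = 1 ∨ Z k ω = 0 := by omega
        rcases hch with h | h
        · exact ⟨Or.inl ⟨h1, h⟩, hb⟩
        · exact ⟨Or.inr ⟨h1, h⟩, hb⟩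
      · rintro ⟨h, -⟩
        rcases h with ⟨h1, h2⟩ | ⟨h1, h2⟩ <;> exact ⟨⟨h1, by omega⟩, by omega⟩
  have hsetpos : ∀ k z, 1 ≤ z → z < l →
      A (k+1) z = (A k (z+1) ∩ (S (k+1))ᶜ) ∪ (A k (z-1) ∩ S (k+1)) := by
    intro k z hz1' hzl
    ext ω
    simp only [hA, hS, Set.mem_setOf_eq, Set.mem_inter_iff, Set.mem_union, Set.mem_compl_iff,
      Set.mem_preimage, Set.mem_singleton_iff]
    rw [hfa k ω]
    by_cases hb : ξ (k+1) ω = true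
    · have hzz : Z (k+1) ω = Z k ω + 1 := by rw [hZ, if_pos hb]
      constructor
      · rintro ⟨⟨h1, h2⟩, h3⟩
        exact Or.inr ⟨⟨h1, by omega⟩, hb⟩
      · rintro (⟨⟨h1, h2⟩, h3⟩ | ⟨⟨h1, h2⟩, h3⟩)
        · exact absurd hb h3
        · exact ⟨⟨h1, by omega⟩, by omega⟩
    · have hzz : Z (k+1) ω = Z k ω - 1 := by rw [hZ, if_neg hb]
      constructor
      · rintro ⟨⟨h1, h2⟩, h3⟩
        have hzk : Z k ω < l := h1 k le_rfl
        exact Or.inl ⟨⟨h1, by omega⟩, hb⟩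
      · rintro (⟨⟨h1, h2⟩, h3⟩ | ⟨⟨h1, h2⟩, h3⟩)
        · exact ⟨⟨h1, by omega⟩, by omega⟩
        · exact absurd h3 hb
  have hHset : ∀ k, Hit (k+1) = Hit k ∪ (A k (l-1) ∩ S (k+1)) := by
    intro k
    ext ω
    simp only [hHit, hA, hS, Set.mem_setOf_eq, Set.mem_union, Set.mem_inter_iff,
      Set.mem_preimage, Set.mem_singleton_iff]
    constructor
    · rintro ⟨i, hi, hli⟩
      by_cases hik : i ≤ k
      · exact Or.inl ⟨i, hik, hli⟩
      · have hik1 : i = k + 1 := by omega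
        subst hik1
        by_cases hHk : ∃ i ≤ k, l ≤ Z i ω
        · exact Or.inl hHk
        · push_neg at hHk
          by_cases hb : ξ (k+1) ω = true
          · have hzz : Z (k+1) ω = Z k ω + 1 := by rw [hZ, if_pos hb]
            have hzk : Z k ω < l := hHk k le_rfl
            exact Or.inr ⟨⟨hHk, by omega⟩, hb⟩
          · have hzz : Z (k+1) ω = Z k ω - 1 := by rw [hZ, if_neg hb]
            have hzk : Z k ω < l := hHk k le_rfl
            exact absurd hli (by omega)
    · rintro (⟨i, hik, hli⟩ | ⟨⟨h1, h2⟩, hb⟩)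
      · exact ⟨i, hik.trans (Nat.le_succ _), hli⟩
      · have hzz : Z (k+1) ω = Z k ω + 1 := by rw [hZ, if_pos hb]
        exact ⟨k+1, le_rfl, by omega⟩
  have hrec0 : ∀ k, m (k+1) 0 = p * m k 1 + p * m k 0 := by
    intro k
    have hdisj : Disjoint (A k 1 ∩ (S (k+1))ᶜ) (A k 0 ∩ (S (k+1))ᶜ) := by
      apply Set.disjoint_left.mpr
      rintro ω ⟨h1, -⟩ ⟨h2, -⟩
      have e1 : Z k ω = 1 := h1.2
      have e0 : Z k ω = 0 := h2.2
      omega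
    have hmu : μ (A (k+1) 0) = μ (A k 1 ∩ (S (k+1))ᶜ) + μ (A k 0 ∩ (S (k+1))ᶜ) := by
      rw [hset0 k, Set.union_inter_distrib_right]
      exact measure_union hdisj ((hAmeas k 0).inter (hSmeas (k+1)).compl)
    have hgoal : m (k+1) 0 = (μ (A (k+1) 0)).toReal := rfl
    rw [hgoal, hmu, ENNReal.toReal_add (measure_ne_top μ _) (measure_ne_top μ _),
      hmp k 1, hmp k 0]
  have hrecpos : ∀ k z, 1 ≤ z → z < l → m (k+1) z = p * m k (z+1) + q * m k (z-1) := by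
    intro k z hz1' hzl
    have hdisj : Disjoint (A k (z+1) ∩ (S (k+1))ᶜ) (A k (z-1) ∩ S (k+1)) := by
      apply Set.disjoint_left.mpr
      rintro ω ⟨-, h1⟩ ⟨-, h2⟩
      exact h1 h2
    have hmu : μ (A (k+1) z) = μ (A k (z+1) ∩ (S (k+1))ᶜ) + μ (A k (z-1) ∩ S (k+1)) := by
      rw [hsetpos k z hz1' hzl]
      exact measure_union hdisj ((hAmeas k (z-1)).inter (hSmeas (k+1)))
    have hgoal : m (k+1) z = (μ (A (k+1) z)).toReal := rfl
    rw [hgoal, hmu, ENNReal.toReal_add (measure_ne_top μ _) (measure_ne_top μ _),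
      hmp k (z+1), hmq k (z-1)]
  have hhrec : ∀ k, hh (k+1) = hh k + q * m k (l-1) := by
    intro k
    have hdisj : Disjoint (Hit k) (A k (l-1) ∩ S (k+1)) := by
      apply Set.disjoint_left.mpr
      rintro ω ⟨i, hi, hli⟩ ⟨⟨h1, -⟩, -⟩
      have := h1 i hi
      omega
    have hmu : μ (Hit (k+1)) = μ (Hit k) + μ (A k (l-1) ∩ S (k+1)) := by
      rw [hHset k]
      exact measure_union hdisj ((hAmeas k (l-1)).inter (hSmeas (k+1)))
    have hgoal : hh (k+1) = (μ (Hit (k+1))).toReal := rfl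
    rw [hgoal, hmu, ENNReal.toReal_add (measure_ne_top μ _) (measure_ne_top μ _), hmq k (l-1)]
  -- initial values
  have hm00 : m 0 0 = 1 := by
    have huniv : A 0 0 = Set.univ := by
      ext ω
      simp only [hA, Set.mem_setOf_eq, Set.mem_univ, iff_true]
      refine ⟨fun i hi => ?_, hZ0 ω⟩
      have : i = 0 := Nat.le_zero.mp hi
      rw [this, hZ0]; omega
    have hgoal : m 0 0 = (μ (A 0 0)).toReal := rfl
    rw [hgoal, huniv, measure_univ, ENNReal.toReal_one]
  have hm0z : ∀ z, 1 ≤ z → m 0 z = 0 := by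
    intro z hz
    have hemp : A 0 z = ∅ := by
      ext ω
      simp only [hA, Set.mem_setOf_eq, Set.mem_empty_iff_false, iff_false, not_and]
      intro h
      rw [hZ0]; omega
    have hgoal : m 0 z = (μ (A 0 z)).toReal := rfl
    rw [hgoal, hemp, measure_empty, ENNReal.toReal_zero]
  have hh0 : hh 0 = 0 := by
    have hemp : Hit 0 = ∅ := by
      ext ω
      simp only [hHit, Set.mem_setOf_eq, Set.mem_empty_iff_false, iff_false, not_exists]
      intro i
      rintro ⟨hi0, hli⟩
      have : i = 0 := Nat.le_zero.mp hi0
      rw [this, hZ0] at hli; omega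
    have hgoal : hh 0 = (μ (Hit 0)).toReal := rfl
    rw [hgoal, hemp, measure_empty, ENNReal.toReal_zero]
  -- potential function
  set V : ℕ → ℝ := fun k => (∑ z ∈ Finset.range l, ρ^z * m k z) + ρ^l * hh k with hV
  have hVstep : ∀ k, V (k+1) = V k + (p - q) * m k 0 := by
    intro k
    have e1 : l - 1 + 1 = l := by omega
    have hSA := sum_shift2 ρ (m k) (l-1) (by rw [e1]; exact hml k)
    rw [e1] at hSA
    have hSB := sum_shift ρ (m k) (l-1)
    rw [e1] at hSB
    have hif : (∑ z ∈ Finset.range l, (if z = 0 then p * m k 0 else 0)) = p * m k 0 := by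
      rw [Finset.sum_ite_eq' (Finset.range l) 0 (fun _ => p * m k 0)]
      exact if_pos (Finset.mem_range.mpr (by omega))
    have hterm : ∀ z ∈ Finset.range l, ρ^z * m (k+1) z
        = p * (ρ^z * m k (z+1)) + ((if z = 0 then p * m k 0 else 0)
          + q * (if z = 0 then 0 else ρ^z * m k (z-1))) := by
      intro z hz
      rcases Nat.eq_zero_or_pos z with rfl | hzpos
      · rw [hrec0 k]
        simp
      · have hzl : z < l := Finset.mem_range.mp hz
        rw [hrecpos k z hzpos hzl]
        simp only [if_neg (by omega : ¬ z = 0)]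
        ring
    have hsum : (∑ z ∈ Finset.range l, ρ^z * m (k+1) z)
        = p * (∑ z ∈ Finset.range l, ρ^z * m k (z+1)) + (p * m k 0
          + q * (∑ z ∈ Finset.range l, (if z = 0 then 0 else ρ^z * m k (z-1)))) := by
      rw [Finset.sum_congr rfl hterm, Finset.sum_add_distrib, Finset.sum_add_distrib,
        ← Finset.mul_sum, ← Finset.mul_sum, hif]
    have hVe1 : V (k+1) = (∑ z ∈ Finset.range l, ρ^z * m (k+1) z) + ρ^l * hh (k+1) := rfl
    have hVe0 : V k = (∑ z ∈ Finset.range l, ρ^z * m k z) + ρ^l * hh k := rfl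
    rw [hVe1, hVe0, hsum, hhrec k]
    have hρq : ρ * q = p := by rw [hρ]; field_simp
    have hA1 : p * (∑ z ∈ Finset.range l, ρ^z * m k (z+1))
        = q * ((∑ z ∈ Finset.range l, ρ^z * m k z) - m k 0) := by
      rw [← hSA, ← hρq]; ring
    have hA2 : q * (∑ z ∈ Finset.range l, (if z = 0 then 0 else ρ^z * m k (z-1)))
        = p * (∑ z ∈ Finset.range l, ρ^z * m k z) - q * (ρ^l * m k (l-1)) := by
      have hx : (∑ z ∈ Finset.range l, (if z = 0 then 0 else ρ^z * m k (z-1)))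
          = ρ * (∑ z ∈ Finset.range l, ρ^z * m k z) - ρ^l * m k (l-1) := by
        linarith [hSB]
      rw [hx, ← hρq]; ring
    rw [hA1, hA2]
    linear_combination (∑ z ∈ Finset.range l, ρ^z * m k z) * hpq1
  have hV0 : V 0 = 1 := by
    have hVe : V 0 = (∑ z ∈ Finset.range l, ρ^z * m 0 z) + ρ^l * hh 0 := rfl
    rw [hVe, hh0, mul_zero, add_zero]
    rw [Finset.sum_eq_single 0 (fun z _ hz0 => by rw [hm0z z (by omega)]; ring)
      (fun h => absurd (Finset.mem_range.mpr (by omega)) h)]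
    rw [hm00, pow_zero, one_mul]
  have hVn : ∀ k, V k ≤ 1 + k * (p - q) := by
    intro k; induction k with
    | zero => simp [hV0]
    | succ k ih =>
      have := hVstep k
      have h1 : (p - q) * m k 0 ≤ (p - q) * 1 :=
        mul_le_mul_of_nonneg_left (hm_le_one k 0) (by linarith)
      push_cast
      push_cast at ih
      nlinarith
  -- conclude
  have hfinal : hh n ≤ (n:ℝ) ^ (-w) := by
    have hsum_nonneg : 0 ≤ ∑ z ∈ Finset.range l, ρ^z * m n z :=
      Finset.sum_nonneg fun z _ => mul_nonneg (by positivity) (hm_nonneg n z)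
    have h1 : ρ^l * hh n ≤ 1 + n * (p - q) := by
      have hx := hVn n
      have hVexp : V n = (∑ z ∈ Finset.range l, ρ^z * m n z) + ρ^l * hh n := rfl
      rw [hVexp] at hx; linarith
    have h2 : 1 + (n:ℝ) * (p - q) ≤ (n:ℝ) * (2*p)^l := by
      have h2p : (2*p) ≤ (2*p)^l := le_self_pow₀ (by linarith) (by omega)
      have hnpq : (n:ℝ) * (p + q) = n := by rw [hpq1, mul_one]
      have : 1 + (n:ℝ) * (p - q) ≤ (n:ℝ) * (2*p) := by nlinarith [hnpq, hn2]
      calc 1 + (n:ℝ) * (p - q) ≤ (n:ℝ) * (2*p) := this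
        _ ≤ (n:ℝ) * (2*p)^l := by nlinarith
    have hρl0 : 0 < ρ^l := by positivity
    have h3 : hh n ≤ (n:ℝ) * (2*p)^l / ρ^l := by
      rw [le_div_iff₀ hρl0]; calc hh n * ρ^l = ρ^l * hh n := by ring
        _ ≤ 1 + n * (p - q) := h1
        _ ≤ (n:ℝ) * (2*p)^l := h2
    have hbase : (2*p)/ρ = 2*q := by
      rw [hρ]; field_simp
    have h4 : (n:ℝ) * (2*p)^l / ρ^l = (n:ℝ) * (2*q)^l := by
      rw [mul_div_assoc, ← div_pow, hbase]
    have h5 : (n:ℝ) * (2*q)^l ≤ (n:ℝ) ^ (-w) := by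
      calc (n:ℝ) * (2*q)^l ≤ (n:ℝ) * (n:ℝ) ^ (-(1+w)) :=
            mul_le_mul_of_nonneg_left hkey hn0.le
        _ = (n:ℝ) ^ (-w) := by
            rw [show -w = 1 + -(1+w) by ring, Real.rpow_add hn0, Real.rpow_one]
    rw [h4] at h3
    linarith [h3, h5]
  have hcn : 0 ≤ (2 * Real.sqrt (p*q) / (1 - 2 * Real.sqrt (p*q))^2) * (n : ℝ) ^ (-(1 + w)) := by
    exact mul_nonneg (div_nonneg (by positivity) (sq_nonneg _)) (Real.rpow_nonneg hn0.le _)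
  have hHn : μ {ω | ∃ k ≤ n, l ≤ Z k ω} = ENNReal.ofReal (hh n) := by
    rw [hhdef]
    exact (ENNReal.ofReal_toReal (measure_ne_top μ _)).symm
  rw [hHn]
  exact ENNReal.ofReal_le_ofReal (by linarith)
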